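/- Let n ≥ 2, m ≥ 3, and let P be an m-th order, n-dimensional stochastic tensor on S = {1,…,n}. If a state i ∈ S is fully transient, i.e., f_{i i i3 … i_m} < 1 for all i3,…,i_m ∈ S, then Σ_{k=1}^{∞} p^{(k)}_{i i i3 … i_m} < ∞ for all i3,…,i_m ∈ S (the series of nonnegative terms converges for every tail). -/
import Mathlib


open Finset

/-- An `m`-th order, `n`-dimensional tensor with `m = r + 2`: the entry
`p_{i₁ i₂ … i_m}` is written `P i₁ t`, where `t = (i₂, …, i_m)` is the tail of
`m - 1 = r + 1` indices. -/
abbrev HOTensor (n r : ℕ) := Fin n → (Fin (r + 1) → Fin n) → ℝ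

/-- `P` is a stochastic tensor. -/
def IsStochasticT {n r : ℕ} (P : HOTensor n r) : Prop :=
  (∀ i t, 0 ≤ P i t ∧ P i t ≤ 1) ∧ ∀ t, ∑ i : Fin n, P i t = 1

/-- The product `A ⊠ B`:
`(A ⊠ B)_{i₁ i₂ … i_m} = Σ_j a_{i₁ j i₂ … i_{m-1}} b_{j i₂ … i_m}`. -/
def tmul {n r : ℕ} (A B : HOTensor n r) : HOTensor n r :=
  fun i t => ∑ j : Fin n, A i (Fin.cons j (Fin.init t)) * B j t

/-- Tensor powers: `tpow P k` is `P^k`, with entries the `k`-step transition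
probabilities `p^{(k)}_{i₁ … i_m}`; `P^0` is the identity tensor. -/
def tpow {n r : ℕ} (P : HOTensor n r) : ℕ → HOTensor n r
  | 0 => fun i t => if i = t 0 then 1 else 0
  | k + 1 => tmul (tpow P k) P

/-- `fpp P k` is the `(k+1)`-step first passage probability tensor `F^{[k+1]}`:
`f^{[1]} = p`, and `f^{[k+1]}_{i₁ i₂ … i_m} = Σ_{j ≠ i₁} f^{[k]}_{i₁ j i₂ … i_{m-1}} p_{j i₂ … i_m}`. -/
def fpp {n r : ℕ} (P : HOTensor n r) : ℕ → HOTensor n r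
  | 0 => P
  | k + 1 => fun i t =>
      ∑ j ∈ Finset.univ.filter (fun j => j ≠ i), fpp P k i (Fin.cons j (Fin.init t)) * P j t

/-- The ever-reaching probability `f_{i₁ i₂ … i_m} = Σ_{k=1}^∞ f^{[k]}_{i₁ i₂ … i_m}`. -/
noncomputable def everReach {n r : ℕ} (P : HOTensor n r) : HOTensor n r :=
  fun i t => ∑' k : ℕ, fpp P k i t

/-- State `j` is reachable from state `i` (`i → j`): for every choice of
`i₃, …, i_m` there is `k ≥ 0` with `p^{(k)}_{j i i₃ … i_m} > 0`. -/
def Reach {n r : ℕ} (P : HOTensor n r) (i j : Fin n) : Prop :=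
  ∀ u : Fin r → Fin n, ∃ k : ℕ, 0 < tpow P k j (Fin.cons i u)

/-- States `i` and `j` communicate (`i ↔ j`). -/
def Comm {n r : ℕ} (P : HOTensor n r) (i j : Fin n) : Prop :=
  Reach P i j ∧ Reach P j i

/-- State `i` is recurrent: `f_{i i i₃ … i_m} = 1` for all `i₃, …, i_m`. -/
def RecurrentState {n r : ℕ} (P : HOTensor n r) (i : Fin n) : Prop :=
  ∀ u : Fin r → Fin n, everReach P i (Fin.cons i u) = 1

/-- State `i` is fully transient: `f_{i i i₃ … i_m} < 1` for all `i₃, …, i_m`. -/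
def FullyTransientState {n r : ℕ} (P : HOTensor n r) (i : Fin n) : Prop :=
  ∀ u : Fin r → Fin n, everReach P i (Fin.cons i u) < 1

/-- `P` is ergodic: for all indices there is `k ≥ 1` with `p^{(k)}_{i₁ … i_m} > 0`. -/
def ErgodicT {n r : ℕ} (P : HOTensor n r) : Prop :=
  ∀ (i : Fin n) (t : Fin (r + 1) → Fin n), ∃ k : ℕ, 1 ≤ k ∧ 0 < tpow P k i t

/-- `P` is regular: some power `P^k`, `k ≥ 1`, has all entries positive. -/
def RegularT {n r : ℕ} (P : HOTensor n r) : Prop :=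
  ∃ k : ℕ, 1 ≤ k ∧ ∀ (i : Fin n) (t : Fin (r + 1) → Fin n), 0 < tpow P k i t

/-- The reduced transition matrix `Q` of `P`: rows and columns are indexed by
`(m-1)`-tuples; the entry in row `(i₁, …, i_{m-1})` and column `(j₁, …, j_{m-1})`
is `p_{i₁ i₂ … i_{m-1} j_{m-1}}` if `j_ℓ = i_{ℓ+1}` for `ℓ = 1, …, m-2`, else `0`. -/
def reducedT {n r : ℕ} (P : HOTensor n r) :
    Matrix (Fin (r + 1) → Fin n) (Fin (r + 1) → Fin n) ℝ :=
  fun u v =>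
    if ∀ ℓ : Fin r, v ℓ.castSucc = u ℓ.succ then
      P (u 0) (Fin.snoc (Fin.tail u) (v (Fin.last r)))
    else 0

/-! ### Auxiliary machinery -/

section Aux

variable {n r : ℕ}

/-- Shift of a tail by prepending `j`. -/
def shiftTail {n r : ℕ} (j : Fin n) (t : Fin (r + 1) → Fin n) : Fin (r + 1) → Fin n :=
  Fin.cons j (Fin.init t)

/-- First-passage kernel: `Gker P i l t h` is the probability, given history `t`,
that the first visit to `i` happens at time `l+1` and the history at that moment is `h`. -/
def Gker {n r : ℕ} (P : HOTensor n r) (i : Fin n) : ℕ →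
    (Fin (r + 1) → Fin n) → (Fin (r + 1) → Fin n) → ℝ
  | 0, t, h => if h = shiftTail i t then P i t else 0
  | l + 1, t, h =>
      ∑ j ∈ Finset.univ.filter (fun j => j ≠ i), Gker P i l (shiftTail j t) h * P j t

/-- Avoidance probability: probability of avoiding `i` for `N+1` steps. -/
def Avoid {n r : ℕ} (P : HOTensor n r) (i : Fin n) : ℕ → (Fin (r + 1) → Fin n) → ℝ
  | 0, t => ∑ j ∈ Finset.univ.filter (fun j => j ≠ i), P j t
  | N + 1, t => ∑ j ∈ Finset.univ.filter (fun j => j ≠ i), Avoid P i N (shiftTail j t) * P j t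

variable (P : HOTensor n r) (i : Fin n)

lemma tpow_nonneg (hP : IsStochasticT P) : ∀ (k : ℕ) (i' : Fin n) (t), 0 ≤ tpow P k i' t := by
  intro k
  induction k with
  | zero => intro i' t; simp only [tpow]; positivity
  | succ k ih =>
      intro i' t
      simp only [tpow, tmul]
      exact Finset.sum_nonneg fun j _ => mul_nonneg (ih _ _) (hP.1 j t).1

lemma tpow_zero_le_one : ∀ (i' : Fin n) (t), tpow P 0 i' t ≤ 1 := by
  intro i' t; simp only [tpow]; split <;> norm_num

lemma fpp_nonneg (hP : IsStochasticT P) : ∀ (k : ℕ) (i' : Fin n) (t), 0 ≤ fpp P k i' t := by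
  intro k
  induction k with
  | zero => intro i' t; exact (hP.1 i' t).1
  | succ k ih =>
      intro i' t
      exact Finset.sum_nonneg fun j _ => mul_nonneg (ih _ _) (hP.1 j t).1

lemma Gker_nonneg (hP : IsStochasticT P) : ∀ (l : ℕ) (t h), 0 ≤ Gker P i l t h := by
  intro l
  induction l with
  | zero =>
      intro t h; simp only [Gker]; split
      · exact (hP.1 i t).1
      · exact le_rfl
  | succ l ih =>
      intro t h
      exact Finset.sum_nonneg fun j _ => mul_nonneg (ih _ _) (hP.1 j t).1

lemma Gker_eq_zero : ∀ (l : ℕ) (t h), h 0 ≠ i → Gker P i l t h = 0 := by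
  intro l
  induction l with
  | zero =>
      intro t h hh
      simp only [Gker]
      rw [if_neg]
      intro he
      exact hh (by rw [he]; rfl)
  | succ l ih =>
      intro t h hh
      simp only [Gker]
      exact Finset.sum_eq_zero fun j _ => by rw [ih _ _ hh, zero_mul]

lemma sum_Gker : ∀ (l : ℕ) (t), ∑ h, Gker P i l t h = fpp P l i t := by
  intro l
  induction l with
  | zero =>
      intro t
      simp only [Gker, fpp]
      rw [Finset.sum_ite_eq' Finset.univ (shiftTail i t) (fun _ => P i t)]
      simp
  | succ l ih =>
      intro t
      simp only [Gker, fpp]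
      rw [Finset.sum_comm]
      exact Finset.sum_congr rfl fun j _ => by rw [← Finset.sum_mul, ih]; rfl

lemma Avoid_nonneg (hP : IsStochasticT P) : ∀ (N : ℕ) (t), 0 ≤ Avoid P i N t := by
  intro N
  induction N with
  | zero =>
      intro t
      exact Finset.sum_nonneg fun j _ => (hP.1 j t).1
  | succ N ih =>
      intro t
      exact Finset.sum_nonneg fun j _ => mul_nonneg (ih _) (hP.1 j t).1

lemma sum_P_split (hP : IsStochasticT P) (t : Fin (r + 1) → Fin n) :
    P i t + ∑ j ∈ Finset.univ.filter (fun j => j ≠ i), P j t = 1 := by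
  have h := hP.2 t
  rw [← Finset.add_sum_erase Finset.univ (fun j => P j t) (Finset.mem_univ i)] at h
  rw [Finset.filter_ne']
  exact h

lemma sum_fpp_add_avoid (hP : IsStochasticT P) : ∀ (N : ℕ) (t),
    (∑ l ∈ Finset.range (N + 1), fpp P l i t) + Avoid P i N t = 1 := by
  intro N
  induction N with
  | zero =>
      intro t
      rw [Finset.sum_range_succ, Finset.sum_range_zero, zero_add]
      have := sum_P_split P i hP t
      show fpp P 0 i t + Avoid P i 0 t = 1
      simp only [fpp, Avoid]
      linarith
  | succ N ih =>
      intro t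
      rw [Finset.sum_range_succ' (fun l => fpp P l i t) (N + 1)]
      show (∑ l ∈ Finset.range (N + 1), fpp P (l + 1) i t) + fpp P 0 i t
          + Avoid P (i := i) (N + 1) t = 1
      simp only [fpp, Avoid, shiftTail]
      rw [Finset.sum_comm (s := Finset.range (N + 1)), add_right_comm,
        ← Finset.sum_add_distrib]
      have h1 : ∀ j ∈ Finset.univ.filter (fun j => j ≠ i),
          (∑ l ∈ Finset.range (N + 1), fpp P l i (Fin.cons j (Fin.init t)) * P j t)
            + Avoid P i N (Fin.cons j (Fin.init t)) * P j t = P j t := by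
        intro j _
        rw [← Finset.sum_mul, ← add_mul]
        have := ih (Fin.cons j (Fin.init t))
        show (∑ l ∈ Finset.range (N + 1), fpp P l i (Fin.cons j (Fin.init t))
            + Avoid P i N (Fin.cons j (Fin.init t))) * P j t = P j t
        rw [this, one_mul]
      rw [Finset.sum_congr rfl h1]
      have := sum_P_split P i hP t
      linarith

lemma sum_fpp_le_one (hP : IsStochasticT P) : ∀ (N : ℕ) (t), ∑ l ∈ Finset.range N, fpp P l i t ≤ 1 := by
  intro N t
  cases N with
  | zero => simp
  | succ N =>
      have := sum_fpp_add_avoid P i hP N t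
      have h2 := Avoid_nonneg P i hP N t
      linarith

lemma summable_fpp (hP : IsStochasticT P) (t : Fin (r + 1) → Fin n) : Summable (fun l => fpp P l i t) :=
  summable_of_sum_range_le (fun l => fpp_nonneg P hP l i t)
    (fun N => sum_fpp_le_one P i hP N t)

lemma sum_fpp_le_everReach (hP : IsStochasticT P) (N : ℕ) (t : Fin (r + 1) → Fin n) :
    ∑ l ∈ Finset.range N, fpp P l i t ≤ everReach P i t :=
  Summable.sum_le_tsum _ (fun l _ => fpp_nonneg P hP l i t) (summable_fpp P i hP t)

/-- Key first-passage decomposition identity. -/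
lemma tpow_eq_sum_Gker : ∀ (k : ℕ) (t),
    tpow P (k + 1) i t
      = ∑ l ∈ Finset.range (k + 1), ∑ h, Gker P i l t h * tpow P (k - l) i h := by
  intro k
  induction k with
  | zero =>
      intro t
      rw [Finset.sum_range_succ, Finset.sum_range_zero, zero_add]
      have hsum : ∀ h : Fin (r + 1) → Fin n,
          Gker P i 0 t h * tpow P (0 - 0) i h
            = if h = shiftTail i t then P i t else 0 := by
        intro h
        simp only [Gker, Nat.sub_zero]
        split
        · next he =>
            rw [he]
            have h0 : tpow P 0 i (shiftTail i t) = 1 := by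
              simp [tpow, shiftTail]
            rw [h0, mul_one]
        · rw [zero_mul]
      rw [Finset.sum_congr rfl fun h _ => hsum h,
        Finset.sum_ite_eq' Finset.univ (shiftTail i t) fun _ => P i t]
      simp only [Finset.mem_univ, if_true]
      rw [zero_add]
      show tmul (tpow P 0) P i t = P i t
      simp only [tmul]
      have hterm : ∀ j : Fin n, tpow P 0 i (Fin.cons j (Fin.init t)) * P j t
          = if i = j then P j t else 0 := by
        intro j
        simp only [tpow, Fin.cons_zero]
        split
        · rw [one_mul]
        · rw [zero_mul]
      rw [Finset.sum_congr rfl fun j _ => hterm j,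
        Finset.sum_ite_eq Finset.univ i fun j => P j t]
      simp
  | succ k ih =>
      intro t
      -- LHS
      show tmul (tpow P (k + 1)) P i t = _
      simp only [tmul]
      -- split off j = i
      rw [Finset.sum_range_succ' (fun l => ∑ h, Gker P i l t h * tpow P (k + 1 - l) i h)]
      have hsub : ∀ l, k + 1 - (l + 1) = k - l := fun l => by omega
      have hR : (∑ l ∈ Finset.range (k + 1), ∑ h, Gker P i (l + 1) t h * tpow P (k + 1 - (l + 1)) i h)
          = ∑ j ∈ Finset.univ.filter (fun j => j ≠ i),
              tpow P (k + 1) i (Fin.cons j (Fin.init t)) * P j t := by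
        calc ∑ l ∈ Finset.range (k + 1), ∑ h, Gker P i (l + 1) t h * tpow P (k + 1 - (l + 1)) i h
            = ∑ l ∈ Finset.range (k + 1), ∑ h, ∑ j ∈ Finset.univ.filter (fun j => j ≠ i),
                Gker P i l (shiftTail j t) h * P j t * tpow P (k - l) i h := by
              refine Finset.sum_congr rfl fun l _ => Finset.sum_congr rfl fun h _ => ?_
              rw [hsub l]
              simp only [Gker]
              rw [Finset.sum_mul]
          _ = ∑ l ∈ Finset.range (k + 1), ∑ j ∈ Finset.univ.filter (fun j => j ≠ i),
                ∑ h, Gker P i l (shiftTail j t) h * P j t * tpow P (k - l) i h := by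
              exact Finset.sum_congr rfl fun l _ => Finset.sum_comm
          _ = ∑ j ∈ Finset.univ.filter (fun j => j ≠ i), ∑ l ∈ Finset.range (k + 1),
                ∑ h, Gker P i l (shiftTail j t) h * P j t * tpow P (k - l) i h :=
              Finset.sum_comm
          _ = ∑ j ∈ Finset.univ.filter (fun j => j ≠ i),
                (∑ l ∈ Finset.range (k + 1), ∑ h, Gker P i l (shiftTail j t) h * tpow P (k - l) i h) * P j t := by
              refine Finset.sum_congr rfl fun j _ => ?_
              rw [Finset.sum_mul]
              refine Finset.sum_congr rfl fun l _ => ?_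
              rw [Finset.sum_mul]
              exact Finset.sum_congr rfl fun h _ => by ring
          _ = ∑ j ∈ Finset.univ.filter (fun j => j ≠ i),
                tpow P (k + 1) i (Fin.cons j (Fin.init t)) * P j t := by
              refine Finset.sum_congr rfl fun j _ => ?_
              rw [← ih (shiftTail j t)]
              rfl
      rw [hR]
      have hG0 : (∑ h, Gker P i 0 t h * tpow P (k + 1 - 0) i h)
          = tpow P (k + 1) i (Fin.cons i (Fin.init t)) * P i t := by
        simp only [Gker, Nat.sub_zero]
        have : ∀ h : Fin (r + 1) → Fin n,
            (if h = shiftTail i t then P i t else 0) * tpow P (k + 1) i h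
              = if h = shiftTail i t then P i t * tpow P (k + 1) i (shiftTail i t) else 0 := by
          intro h
          split
          · next he => rw [he]
          · rw [zero_mul]
        rw [Finset.sum_congr rfl fun h _ => this h,
          Finset.sum_ite_eq' Finset.univ (shiftTail i t)]
        simp only [Finset.mem_univ, if_true]
        rw [mul_comm]
        rfl
      rw [hG0]
      rw [Finset.filter_ne']
      rw [← Finset.add_sum_erase Finset.univ
        (fun j => tpow P (k + 1) i (Fin.cons j (Fin.init t)) * P j t) (Finset.mem_univ i)]
      exact add_comm _ _

/-- Triangular double-sum reindexing. -/
lemma sum_range_tri (c : ℕ → ℕ → ℝ) : ∀ N : ℕ,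
    ∑ k ∈ Finset.range N, ∑ l ∈ Finset.range (k + 1), c l (k - l)
      = ∑ l ∈ Finset.range N, ∑ m ∈ Finset.range (N - l), c l m := by
  intro N
  induction N with
  | zero => simp
  | succ N ih =>
      rw [Finset.sum_range_succ, ih]
      have h1 : ∀ l ∈ Finset.range (N + 1),
          ∑ m ∈ Finset.range (N + 1 - l), c l m
            = (∑ m ∈ Finset.range (N - l), c l m) + c l (N - l) := by
        intro l hl
        have : N + 1 - l = (N - l) + 1 := by
          have := Finset.mem_range.mp hl; omega
        rw [this, Finset.sum_range_succ]
      rw [Finset.sum_congr rfl h1, Finset.sum_add_distrib]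
      congr 1
      rw [Finset.sum_range_succ]
      simp

end Aux

/-- if state `i` is fully transient then `Σ_{k≥1} p^{(k)}_{i i i₃ … i_m} < ∞`
for all `i₃, …, i_m` (the nonnegative series is summable). -/
theorem fullyTransient_implies_convergence (n r : ℕ) (hn : 2 ≤ n) (hr : 1 ≤ r)
    (P : HOTensor n r) (hP : IsStochasticT P) (i : Fin n)
    (htr : FullyTransientState P i) :
    ∀ u : Fin r → Fin n,
      Summable (fun k : ℕ => tpow P (k + 1) i (Fin.cons i u)) := by
  have hn0 : 0 < n := by omega
  haveI : Nonempty (Fin n) := Fin.pos_iff_nonempty.mp hn0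
  have hne : (Finset.univ : Finset (Fin r → Fin n)).Nonempty := Finset.univ_nonempty
  set θ : ℝ := Finset.univ.sup' hne (fun u => everReach P i (Fin.cons i u)) with hθdef
  have hθ1 : θ < 1 := (Finset.sup'_lt_iff hne).mpr fun u _ => htr u
  have hθ0 : 0 ≤ θ :=
    le_trans (tsum_nonneg fun l => fpp_nonneg P hP l i _)
      (Finset.le_sup' (fun u => everReach P i (Fin.cons i u))
        (Finset.mem_univ (Classical.arbitrary (Fin r → Fin n))))
  have hfppθ : ∀ (N : ℕ) (u : Fin r → Fin n),
      ∑ l ∈ Finset.range N, fpp P l i (Fin.cons i u) ≤ θ := fun N u =>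
    le_trans (sum_fpp_le_everReach P i hP N _)
      (Finset.le_sup' (fun u => everReach P i (Fin.cons i u)) (Finset.mem_univ u))
  set s : ℕ → (Fin (r + 1) → Fin n) → ℝ :=
    fun N t => ∑ k ∈ Finset.range N, tpow P (k + 1) i t with hsdef
  set S : ℕ → ℝ := fun N => Finset.univ.sup' hne (fun u => s N (Fin.cons i u)) with hSdef
  have hS0 : ∀ N, 0 ≤ S N := fun N =>
    le_trans (Finset.sum_nonneg fun k _ => tpow_nonneg P hP _ i _)
      (Finset.le_sup' (fun u => s N (Fin.cons i u))
        (Finset.mem_univ (Classical.arbitrary (Fin r → Fin n))))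
  have key : ∀ (N : ℕ) (u : Fin r → Fin n), s N (Fin.cons i u) ≤ θ * (1 + S N) := by
    intro N u
    show (∑ k ∈ Finset.range N, tpow P (k + 1) i (Fin.cons i u)) ≤ θ * (1 + S N)
    have step1 : (∑ k ∈ Finset.range N, tpow P (k + 1) i (Fin.cons i u))
        = ∑ k ∈ Finset.range N, ∑ l ∈ Finset.range (k + 1),
            (fun l m => ∑ h, Gker P i l (Fin.cons i u) h * tpow P m i h) l (k - l) :=
      Finset.sum_congr rfl fun k _ => tpow_eq_sum_Gker P i k (Fin.cons i u)
    have step2 := sum_range_tri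
      (fun l m => ∑ h, Gker P i l (Fin.cons i u) h * tpow P m i h) N
    rw [step1, step2]
    have hbound : ∀ l ∈ Finset.range N,
        (∑ m ∈ Finset.range (N - l), ∑ h, Gker P i l (Fin.cons i u) h * tpow P m i h)
          ≤ fpp P l i (Fin.cons i u) * (1 + S N) := by
      intro l _
      rw [Finset.sum_comm, ← sum_Gker P i l (Fin.cons i u), Finset.sum_mul]
      refine Finset.sum_le_sum fun h _ => ?_
      rw [← Finset.mul_sum]
      by_cases hhi : h 0 = i
      · refine mul_le_mul_of_nonneg_left ?_ (Gker_nonneg P i hP l (Fin.cons i u) h)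
        have claim : ∀ M, M ≤ N → ∑ m ∈ Finset.range M, tpow P m i h ≤ 1 + S N := by
          intro M hM
          cases M with
          | zero =>
              simp only [Finset.range_zero, Finset.sum_empty]
              linarith [hS0 N]
          | succ M' =>
              rw [Finset.sum_range_succ' (fun m => tpow P m i h) M']
              have e2 : ∑ m ∈ Finset.range M', tpow P (m + 1) i h
                  ≤ ∑ m ∈ Finset.range N, tpow P (m + 1) i h :=
                Finset.sum_le_sum_of_subset_of_nonneg
                  (Finset.range_subset_range.mpr (by omega))
                  (fun _ _ _ => tpow_nonneg P hP _ i h)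
              have e3 : ∑ m ∈ Finset.range N, tpow P (m + 1) i h ≤ S N := by
                have hh : Fin.cons i (Fin.tail h) = h := by
                  rw [← hhi]; exact Fin.cons_self_tail h
                have h5 : s N (Fin.cons i (Fin.tail h)) ≤ S N :=
                  Finset.le_sup' (fun u => s N (Fin.cons i u))
                    (Finset.mem_univ (Fin.tail h))
                rw [hh] at h5
                exact h5
              have e4 := tpow_zero_le_one P i h
              linarith
        exact claim (N - l) (Nat.sub_le N l)
      · rw [Gker_eq_zero P i l (Fin.cons i u) h hhi, zero_mul, zero_mul]
    calc ∑ l ∈ Finset.range N, ∑ m ∈ Finset.range (N - l),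
            ∑ h, Gker P i l (Fin.cons i u) h * tpow P m i h
        ≤ ∑ l ∈ Finset.range N, fpp P l i (Fin.cons i u) * (1 + S N) :=
          Finset.sum_le_sum hbound
      _ = (∑ l ∈ Finset.range N, fpp P l i (Fin.cons i u)) * (1 + S N) := by
          rw [Finset.sum_mul]
      _ ≤ θ * (1 + S N) := by
          refine mul_le_mul_of_nonneg_right (hfppθ N u) ?_
          linarith [hS0 N]
  have hSN : ∀ N, S N ≤ θ * (1 + S N) := fun N =>
    Finset.sup'_le hne (fun u => s N (Fin.cons i u)) fun u _ => key N u
  have hSbound : ∀ N, S N ≤ θ / (1 - θ) := by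
    intro N
    have h1θ : 0 < 1 - θ := by linarith
    rw [le_div_iff₀ h1θ]
    nlinarith [hSN N]
  intro u
  refine summable_of_sum_range_le (c := θ / (1 - θ)) (fun k => tpow_nonneg P hP (k + 1) i _) (fun N => ?_)
  exact le_trans
    (Finset.le_sup' (fun u => s N (Fin.cons i u)) (Finset.mem_univ u)) (hSbound N)
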